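/- With M_k the Markov parameter matrix and ker M_{f-d+1} = ker M_{f-d+2} in the stabilized regime (where d = dim ker D and f = dim ker M_{f-d+1}), the map v ↦ [B AB ... A^{f-d}B] v restricted to ker M_{f-d+1} is injective. Consequently, the strongly reachable subspace R_s = [B AB ... A^{f-d}B](ker M_{f-d+1}) has dimension f. -/

import Mathlib

open Matrix

noncomputable def Markov {n m p : ℕ} (A : Matrix (Fin n) (Fin n) ℝ) (B : Matrix (Fin n) (Fin m) ℝ)
    (C : Matrix (Fin p) (Fin n) ℝ) (D : Matrix (Fin p) (Fin m) ℝ) (k : ℕ) :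
    Matrix (Fin k × Fin p) (Fin k × Fin m) ℝ :=
  fun ir jc =>
    if (ir.1 : ℕ) + (jc.1 : ℕ) + 1 < k then 0
    else if (ir.1 : ℕ) + (jc.1 : ℕ) + 1 = k then D ir.2 jc.2
    else (C * A ^ ((ir.1 : ℕ) + (jc.1 : ℕ) - k) * B) ir.2 jc.2

namespace FastAux

variable {n m p : ℕ} (A : Matrix (Fin n) (Fin n) ℝ) (B : Matrix (Fin n) (Fin m) ℝ)
    (C : Matrix (Fin p) (Fin n) ℝ) (D : Matrix (Fin p) (Fin m) ℝ)

/-- controllability-style matrix -/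
def ctrbM (k : ℕ) : Matrix (Fin n) (Fin k × Fin m) ℝ :=
  Matrix.of fun r jc => (A ^ (jc.1 : ℕ) * B) r jc.2

lemma mulVec_pair {k : ℕ} (M : Matrix (Fin k × Fin p) (Fin k × Fin m) ℝ)
    (v : Fin k × Fin m → ℝ) (i : Fin k) (r : Fin p) :
    M.mulVec v (i, r) = ∑ j : Fin k, ∑ c : Fin m, M (i, r) (j, c) * v (j, c) := by
  simp [Matrix.mulVec, dotProduct, Fintype.sum_prod_type]

lemma ctrb_mulVec {k : ℕ} (v : Fin k × Fin m → ℝ) (x : Fin n) :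
    (ctrbM A B k).mulVec v x = ∑ j : Fin k, ∑ c : Fin m, (A ^ (j : ℕ) * B) x c * v (j, c) := by
  simp [ctrbM, Matrix.mulVec, dotProduct, Fintype.sum_prod_type]

-- entry lemmas
lemma markov_castSucc {k : ℕ} (i : Fin (k + 2)) (r : Fin p) (j : Fin (k + 1)) (c : Fin m)
    (hi : 0 < (i : ℕ)) :
    Markov A B C D (k + 2) (i, r) (j.castSucc, c)
      = Markov A B C D (k + 1) (⟨(i : ℕ) - 1, by omega⟩, r) (j, c) := by
  have hj : ((j.castSucc : Fin (k + 2)) : ℕ) = (j : ℕ) := rfl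
  simp only [Markov, hj]
  rcases lt_trichotomy (((i : ℕ) - 1) + (j : ℕ) + 1) (k + 1) with h | h | h
  · rw [if_pos (by omega), if_pos (by omega)]
  · rw [if_neg (by omega), if_pos (by omega), if_neg (by omega), if_pos (by omega)]
  · rw [if_neg (by omega), if_neg (by omega), if_neg (by omega), if_neg (by omega)]
    have he : (i : ℕ) + (j : ℕ) - (k + 2) = ((i : ℕ) - 1) + (j : ℕ) - (k + 1) := by omega
    rw [he]

lemma markov_castSucc_zero {k : ℕ} (i : Fin (k + 2)) (r : Fin p) (j : Fin (k + 1)) (c : Fin m)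
    (hi : (i : ℕ) = 0) :
    Markov A B C D (k + 2) (i, r) (j.castSucc, c) = 0 := by
  have hj : ((j.castSucc : Fin (k + 2)) : ℕ) = (j : ℕ) := rfl
  simp only [Markov, hj]
  rw [if_pos (by omega)]

lemma markov_succ {k : ℕ} (i : Fin (k + 2)) (r : Fin p) (j : Fin (k + 1)) (c : Fin m)
    (hi : (i : ℕ) < k + 1) :
    Markov A B C D (k + 2) (i, r) (j.succ, c)
      = Markov A B C D (k + 1) (⟨(i : ℕ), hi⟩, r) (j, c) := by
  have hj : ((j.succ : Fin (k + 2)) : ℕ) = (j : ℕ) + 1 := rfl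
  simp only [Markov, hj]
  rcases lt_trichotomy ((i : ℕ) + (j : ℕ) + 1) (k + 1) with h | h | h
  · rw [if_pos (by omega), if_pos (by omega)]
  · rw [if_neg (by omega), if_pos (by omega), if_neg (by omega), if_pos (by omega)]
  · rw [if_neg (by omega), if_neg (by omega), if_neg (by omega), if_neg (by omega)]
    have he : (i : ℕ) + ((j : ℕ) + 1) - (k + 2) = (i : ℕ) + (j : ℕ) - (k + 1) := by omega
    rw [he]

lemma markov_succ_last {k : ℕ} (i : Fin (k + 2)) (r : Fin p) (j : Fin (k + 1)) (c : Fin m)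
    (hi : (i : ℕ) = k + 1) :
    Markov A B C D (k + 2) (i, r) (j.succ, c) = (C * A ^ (j : ℕ) * B) r c := by
  have hj : ((j.succ : Fin (k + 2)) : ℕ) = (j : ℕ) + 1 := rfl
  simp only [Markov, hj]
  rw [if_neg (by omega), if_neg (by omega)]
  have he : (i : ℕ) + ((j : ℕ) + 1) - (k + 2) = (j : ℕ) := by omega
  rw [he]
-- append-zero linear map
def appL (k m' : ℕ) : ((Fin (k + 1) × Fin m') → ℝ) →ₗ[ℝ] ((Fin (k + 2) × Fin m') → ℝ) where
  toFun v := fun jc => if h : (jc.1 : ℕ) < k + 1 then v (⟨(jc.1 : ℕ), h⟩, jc.2) else 0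
  map_add' u v := by funext jc; by_cases h : (jc.1 : ℕ) ≤ k <;> simp [h]
  map_smul' a v := by funext jc; by_cases h : (jc.1 : ℕ) ≤ k <;> simp [h]

/-- prepend-zero (shift) -/
def pre {k m' : ℕ} (v : Fin (k + 1) × Fin m' → ℝ) : Fin (k + 2) × Fin m' → ℝ :=
  fun jc => if h : 0 < (jc.1 : ℕ) then v (⟨(jc.1 : ℕ) - 1, by omega⟩, jc.2) else 0

lemma appL_castSucc {k m' : ℕ} (v : Fin (k + 1) × Fin m' → ℝ) (j : Fin (k + 1)) (c : Fin m') :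
    appL k m' v (j.castSucc, c) = v (j, c) := by
  have h : ((j.castSucc : Fin (k + 2)) : ℕ) < k + 1 := j.isLt
  simp only [appL, LinearMap.coe_mk, AddHom.coe_mk]
  rw [dif_pos h]
  rfl

lemma appL_last {k m' : ℕ} (v : Fin (k + 1) × Fin m' → ℝ) (c : Fin m') :
    appL k m' v (Fin.last (k + 1), c) = 0 := by
  simp only [appL, LinearMap.coe_mk, AddHom.coe_mk]
  rw [dif_neg (by simp)]

lemma pre_zero {k m' : ℕ} (v : Fin (k + 1) × Fin m' → ℝ) (c : Fin m') :
    pre v (0, c) = 0 := by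
  simp [pre]

lemma pre_succ {k m' : ℕ} (v : Fin (k + 1) × Fin m' → ℝ) (j : Fin (k + 1)) (c : Fin m') :
    pre v (j.succ, c) = v (j, c) := by
  have h : ((j.succ : Fin (k + 2)) : ℕ) = (j : ℕ) + 1 := rfl
  simp only [pre, h]
  rw [dif_pos (by omega)]
  have he : (⟨(j : ℕ) + 1 - 1, by omega⟩ : Fin (k + 1)) = j := Fin.ext (by simp)
  rw [he]

lemma appL_injective (k m' : ℕ) : Function.Injective (appL k m') := by
  intro u v huv
  funext jc
  obtain ⟨j, c⟩ := jc
  have := congrFun huv (j.castSucc, c)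
  rwa [appL_castSucc, appL_castSucc] at this

set_option maxHeartbeats 1000000 in
/-- appending a zero block stays in the kernel -/
lemma app_ker {k : ℕ} (v : Fin (k + 1) × Fin m → ℝ)
    (hv : (Markov A B C D (k + 1)).mulVec v = 0) :
    (Markov A B C D (k + 2)).mulVec (appL k m v) = 0 := by
  funext ir
  obtain ⟨i, r⟩ := ir
  rw [mulVec_pair]
  have hsplit : ∀ g : Fin (k + 2) → ℝ, ∑ j : Fin (k + 2), g j
      = (∑ j : Fin (k + 1), g j.castSucc) + g (Fin.last (k + 1)) := fun g =>
    Fin.sum_univ_castSucc g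
  rw [hsplit]
  have hlast : ∑ c : Fin m,
      Markov A B C D (k + 2) (i, r) (Fin.last (k + 1), c) * appL k m v (Fin.last (k + 1), c) = 0 := by
    apply Finset.sum_eq_zero; intro c _; rw [appL_last]; ring
  rw [hlast, add_zero]
  by_cases hi : 0 < (i : ℕ)
  · have : ∀ j : Fin (k + 1), ∀ c : Fin m,
        Markov A B C D (k + 2) (i, r) (j.castSucc, c) * appL k m v (j.castSucc, c)
        = Markov A B C D (k + 1) (⟨(i : ℕ) - 1, by omega⟩, r) (j, c) * v (j, c) := by
      intro j c; rw [markov_castSucc A B C D i r j c hi, appL_castSucc]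
    calc (∑ j : Fin (k + 1), ∑ c : Fin m,
          Markov A B C D (k + 2) (i, r) (j.castSucc, c) * appL k m v (j.castSucc, c))
        = ∑ j : Fin (k + 1), ∑ c : Fin m,
          Markov A B C D (k + 1) (⟨(i : ℕ) - 1, by omega⟩, r) (j, c) * v (j, c) := by
          apply Finset.sum_congr rfl; intro j _; apply Finset.sum_congr rfl; intro c _
          exact this j c
      _ = (Markov A B C D (k + 1)).mulVec v (⟨(i : ℕ) - 1, by omega⟩, r) :=
          (mulVec_pair (Markov A B C D (k + 1)) v ⟨(i : ℕ) - 1, by omega⟩ r).symm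
      _ = 0 := by rw [hv]; simp
  · apply Finset.sum_eq_zero; intro j _; apply Finset.sum_eq_zero; intro c _
    rw [markov_castSucc_zero A B C D i r j c (by omega)]; ring

set_option maxHeartbeats 1000000 in
/-- prepending zero stays in the kernel, given the controllability condition -/
lemma pre_ker {k : ℕ} (v : Fin (k + 1) × Fin m → ℝ)
    (hv : (Markov A B C D (k + 1)).mulVec v = 0)
    (hc : (ctrbM A B (k + 1)).mulVec v = 0) :
    (Markov A B C D (k + 2)).mulVec (pre v) = 0 := by
  funext ir
  obtain ⟨i, r⟩ := ir
  rw [mulVec_pair]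
  have hsplit : ∀ g : Fin (k + 2) → ℝ, ∑ j : Fin (k + 2), g j
      = g 0 + ∑ j : Fin (k + 1), g j.succ := fun g => Fin.sum_univ_succ g
  rw [hsplit]
  have h0 : ∑ c : Fin m, Markov A B C D (k + 2) (i, r) (0, c) * pre v (0, c) = 0 := by
    apply Finset.sum_eq_zero; intro c _; rw [pre_zero]; ring
  rw [h0, zero_add]
  by_cases hi : (i : ℕ) < k + 1
  · calc (∑ j : Fin (k + 1), ∑ c : Fin m,
          Markov A B C D (k + 2) (i, r) (j.succ, c) * pre v (j.succ, c))
        = ∑ j : Fin (k + 1), ∑ c : Fin m,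
          Markov A B C D (k + 1) (⟨(i : ℕ), hi⟩, r) (j, c) * v (j, c) := by
          apply Finset.sum_congr rfl; intro j _; apply Finset.sum_congr rfl; intro c _
          rw [markov_succ A B C D i r j c hi, pre_succ]
      _ = (Markov A B C D (k + 1)).mulVec v (⟨(i : ℕ), hi⟩, r) :=
          (mulVec_pair (Markov A B C D (k + 1)) v ⟨(i : ℕ), hi⟩ r).symm
      _ = 0 := by rw [hv]; simp
  · have hi' : (i : ℕ) = k + 1 := by omega
    calc (∑ j : Fin (k + 1), ∑ c : Fin m,
          Markov A B C D (k + 2) (i, r) (j.succ, c) * pre v (j.succ, c))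
        = ∑ j : Fin (k + 1), ∑ c : Fin m, (C * A ^ (j : ℕ) * B) r c * v (j, c) := by
          apply Finset.sum_congr rfl; intro j _; apply Finset.sum_congr rfl; intro c _
          rw [markov_succ_last A B C D i r j c hi', pre_succ]
      _ = ∑ j : Fin (k + 1), ∑ c : Fin m, ∑ x : Fin n,
            C r x * ((A ^ (j : ℕ) * B) x c * v (j, c)) := by
          apply Finset.sum_congr rfl; intro j _; apply Finset.sum_congr rfl; intro c _
          rw [Matrix.mul_assoc, Matrix.mul_apply, Finset.sum_mul]
          apply Finset.sum_congr rfl; intro x _; ring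
      _ = ∑ j : Fin (k + 1), ∑ x : Fin n, ∑ c : Fin m,
            C r x * ((A ^ (j : ℕ) * B) x c * v (j, c)) := by
          apply Finset.sum_congr rfl; intro j _; exact Finset.sum_comm
      _ = ∑ x : Fin n, ∑ j : Fin (k + 1), ∑ c : Fin m,
            C r x * ((A ^ (j : ℕ) * B) x c * v (j, c)) := Finset.sum_comm
      _ = ∑ x : Fin n, C r x * ((ctrbM A B (k + 1)).mulVec v x) := by
          apply Finset.sum_congr rfl; intro x _
          rw [ctrb_mulVec, Finset.mul_sum]
          apply Finset.sum_congr rfl; intro j _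
          rw [Finset.mul_sum]
      _ = 0 := by rw [hc]; simp

set_option maxHeartbeats 1000000 in
/-- shifting by one power of `A` preserves the controllability kernel condition. -/
lemma ctrb_shift {k : ℕ} (v u : Fin (k + 1) × Fin m → ℝ)
    (hlast : ∀ c, v (Fin.last k, c) = 0)
    (h0 : ∀ c, u (0, c) = 0)
    (hs : ∀ (j : Fin k) (c : Fin m), u (j.succ, c) = v (j.castSucc, c))
    (hc : (ctrbM A B (k + 1)).mulVec v = 0) :
    (ctrbM A B (k + 1)).mulVec u = 0 := by
  funext x
  rw [ctrb_mulVec]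
  rw [Fin.sum_univ_succ (fun j : Fin (k + 1) => ∑ c : Fin m, (A ^ (j : ℕ) * B) x c * u (j, c))]
  have h0' : ∑ c : Fin m, (A ^ (((0 : Fin (k + 1))) : ℕ) * B) x c * u (0, c) = 0 := by
    apply Finset.sum_eq_zero; intro c _; rw [h0]; ring
  rw [h0', zero_add]
  have hw : ∀ y : Fin n,
      ∑ j : Fin k, ∑ c : Fin m, (A ^ (j : ℕ) * B) y c * v (j.castSucc, c) = 0 := by
    intro y
    have hcy := congrFun hc y
    rw [ctrb_mulVec] at hcy
    rw [Fin.sum_univ_castSucc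
      (fun j : Fin (k + 1) => ∑ c : Fin m, (A ^ (j : ℕ) * B) y c * v (j, c))] at hcy
    have hl : ∑ c : Fin m, (A ^ ((Fin.last k : Fin (k + 1)) : ℕ) * B) y c * v (Fin.last k, c)
        = 0 := by
      apply Finset.sum_eq_zero; intro c _; rw [hlast]; ring
    rw [hl, add_zero] at hcy
    exact hcy
  calc (∑ j : Fin k, ∑ c : Fin m, (A ^ ((j.succ : Fin (k + 1)) : ℕ) * B) x c * u (j.succ, c))
      = ∑ j : Fin k, ∑ c : Fin m, ∑ y : Fin n,
          A x y * ((A ^ (j : ℕ) * B) y c * v (j.castSucc, c)) := by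
        apply Finset.sum_congr rfl; intro j _; apply Finset.sum_congr rfl; intro c _
        rw [hs]
        have hp : (A ^ ((j.succ : Fin (k + 1)) : ℕ) * B) x c
            = ∑ y : Fin n, A x y * (A ^ (j : ℕ) * B) y c := by
          have hj : ((j.succ : Fin (k + 1)) : ℕ) = (j : ℕ) + 1 := rfl
          rw [hj, pow_succ', Matrix.mul_assoc, Matrix.mul_apply]
        rw [hp, Finset.sum_mul]
        apply Finset.sum_congr rfl; intro y _; ring
    _ = ∑ j : Fin k, ∑ y : Fin n, ∑ c : Fin m,
          A x y * ((A ^ (j : ℕ) * B) y c * v (j.castSucc, c)) := by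
        apply Finset.sum_congr rfl; intro j _; exact Finset.sum_comm
    _ = ∑ y : Fin n, ∑ j : Fin k, ∑ c : Fin m,
          A x y * ((A ^ (j : ℕ) * B) y c * v (j.castSucc, c)) := Finset.sum_comm
    _ = ∑ y : Fin n, A x y *
          ∑ j : Fin k, ∑ c : Fin m, (A ^ (j : ℕ) * B) y c * v (j.castSucc, c) := by
        apply Finset.sum_congr rfl; intro y _
        rw [Finset.mul_sum]
        apply Finset.sum_congr rfl; intro j _
        rw [Finset.mul_sum]
    _ = 0 := by
        apply Finset.sum_eq_zero; intro y _; rw [hw]; ring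

set_option maxHeartbeats 1000000 in
lemma step {k f : ℕ}
    (h1 : Module.finrank ℝ (LinearMap.ker (Markov A B C D (k + 1)).mulVecLin) = f)
    (h2 : Module.finrank ℝ (LinearMap.ker (Markov A B C D (k + 2)).mulVecLin) = f)
    (v : Fin (k + 1) × Fin m → ℝ)
    (hv : (Markov A B C D (k + 1)).mulVec v = 0)
    (hc : (ctrbM A B (k + 1)).mulVec v = 0) :
    (∀ c, v (Fin.last k, c) = 0) ∧
    ∃ u : Fin (k + 1) × Fin m → ℝ,
      (Markov A B C D (k + 1)).mulVec u = 0 ∧ (ctrbM A B (k + 1)).mulVec u = 0 ∧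
      ∀ (j : Fin k) (c : Fin m), u (j.succ, c) = v (j.castSucc, c) := by
  have hmap : ∀ x ∈ LinearMap.ker (Markov A B C D (k + 1)).mulVecLin,
      appL k m x ∈ LinearMap.ker (Markov A B C D (k + 2)).mulVecLin := by
    intro x hx
    rw [LinearMap.mem_ker, Matrix.mulVecLin_apply]
    exact app_ker A B C D x (by rwa [LinearMap.mem_ker, Matrix.mulVecLin_apply] at hx)
  set φ := (appL k m).restrict hmap with hφ
  have hinj : Function.Injective φ := by
    intro x y hxy
    apply Subtype.ext
    apply appL_injective k m
    exact congrArg Subtype.val hxy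
  have hsurj : Function.Surjective φ :=
    (LinearMap.injective_iff_surjective_of_finrank_eq_finrank (by rw [h1, h2])).mp hinj
  have hpre : pre v ∈ LinearMap.ker (Markov A B C D (k + 2)).mulVecLin := by
    rw [LinearMap.mem_ker, Matrix.mulVecLin_apply]
    exact pre_ker A B C D v hv hc
  obtain ⟨u0, hu0⟩ := hsurj ⟨pre v, hpre⟩
  have happ : appL k m u0.val = pre v := congrArg Subtype.val hu0
  have hprelast : ∀ c : Fin m, pre v (Fin.last (k + 1), c) = v (Fin.last k, c) := by
    intro c
    have hpos : 0 < ((Fin.last (k + 1) : Fin (k + 2)) : ℕ) := by simp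
    simp only [pre]
    rw [dif_pos hpos]
    have he : (⟨((Fin.last (k + 1) : Fin (k + 2)) : ℕ) - 1, by omega⟩ : Fin (k + 1))
        = Fin.last k := Fin.ext (by simp)
    rw [he]
  have hlast : ∀ c, v (Fin.last k, c) = 0 := by
    intro c
    have h' := congrFun happ (Fin.last (k + 1), c)
    rw [appL_last, hprelast] at h'
    exact h'.symm
  refine ⟨hlast, u0.val, ?_, ?_, ?_⟩
  · have := u0.2
    rwa [LinearMap.mem_ker, Matrix.mulVecLin_apply] at this
  · -- controllability condition for u0
    have h0 : ∀ c, u0.val (0, c) = 0 := by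
      intro c
      have h' := congrFun happ ((0 : Fin (k + 1)).castSucc, c)
      rw [appL_castSucc] at h'
      rw [h']
      have : ((0 : Fin (k + 1)).castSucc : Fin (k + 2)) = 0 := Fin.castSucc_zero
      rw [this, pre_zero]
    have hs : ∀ (j : Fin k) (c : Fin m), u0.val (j.succ, c) = v (j.castSucc, c) := by
      intro j c
      have h' := congrFun happ ((j.succ).castSucc, c)
      rw [appL_castSucc] at h'
      rw [h', ← Fin.succ_castSucc, pre_succ]
    exact ctrb_shift A B v u0.val hlast h0 hs hc
  · intro j c
    have h' := congrFun happ ((j.succ).castSucc, c)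
    rw [appL_castSucc] at h'
    rw [h', ← Fin.succ_castSucc, pre_succ]

lemma core {k f : ℕ}
    (h1 : Module.finrank ℝ (LinearMap.ker (Markov A B C D (k + 1)).mulVecLin) = f)
    (h2 : Module.finrank ℝ (LinearMap.ker (Markov A B C D (k + 2)).mulVecLin) = f) :
    ∀ v : Fin (k + 1) × Fin m → ℝ,
      (Markov A B C D (k + 1)).mulVec v = 0 → (ctrbM A B (k + 1)).mulVec v = 0 → v = 0 := by
  suffices H : ∀ t : ℕ, ∀ v : Fin (k + 1) × Fin m → ℝ,
      (Markov A B C D (k + 1)).mulVec v = 0 → (ctrbM A B (k + 1)).mulVec v = 0 →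
      ∀ (j : Fin (k + 1)) (c : Fin m), k ≤ (j : ℕ) + t → v (j, c) = 0 by
    intro v hv hc
    funext jc
    obtain ⟨j, c⟩ := jc
    exact H k v hv hc j c (by omega)
  intro t
  induction t with
  | zero =>
    intro v hv hc j c hj
    have hjl : j = Fin.last k := Fin.ext (by rw [Fin.val_last]; omega)
    rw [hjl]
    exact (step A B C D h1 h2 v hv hc).1 c
  | succ t ih =>
    intro v hv hc j c hj
    obtain ⟨hlast, u, hu1, hu2, hs⟩ := step A B C D h1 h2 v hv hc
    by_cases hjk : (j : ℕ) < k
    · have hje : j = (⟨(j : ℕ), hjk⟩ : Fin k).castSucc := Fin.ext rfl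
      rw [hje, ← hs ⟨(j : ℕ), hjk⟩ c]
      exact ih u hu1 hu2 _ c (by simp only [Fin.val_succ, Fin.val_mk]; omega)
    · have hjl : j = Fin.last k := Fin.ext (by rw [Fin.val_last]; omega)
      rw [hjl]
      exact hlast c

end FastAux

/-- In the stabilized regime `dim ker M_{f-d+1} = dim ker M_{f-d+2} = f`
(with `d = dim ker D`), the map `v ↦ [B AB … A^{f-d}B] v` is injective on
`ker M_{f-d+1}`; consequently the strongly reachable subspace
`R_s = [B AB … A^{f-d}B](ker M_{f-d+1})` has dimension `f`. -/
theorem fast_space_dimension {n m p f d : ℕ}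
    (A : Matrix (Fin n) (Fin n) ℝ) (B : Matrix (Fin n) (Fin m) ℝ)
    (C : Matrix (Fin p) (Fin n) ℝ) (D : Matrix (Fin p) (Fin m) ℝ)
    (hd : Module.finrank ℝ (LinearMap.ker D.mulVecLin) = d)
    (h1 : Module.finrank ℝ (LinearMap.ker (Markov A B C D (f - d + 1)).mulVecLin) = f)
    (h2 : Module.finrank ℝ (LinearMap.ker (Markov A B C D (f - d + 2)).mulVecLin) = f) :
    let ctrb : Matrix (Fin n) (Fin (f - d + 1) × Fin m) ℝ :=
      Matrix.of fun r jc => (A ^ (jc.1 : ℕ) * B) r jc.2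
    (∀ v : Fin (f - d + 1) × Fin m → ℝ,
        (Markov A B C D (f - d + 1)).mulVec v = 0 → ctrb.mulVec v = 0 → v = 0) ∧
    Module.finrank ℝ
      (Submodule.map ctrb.mulVecLin
        (LinearMap.ker (Markov A B C D (f - d + 1)).mulVecLin)) = f := by
  intro ctrb
  have hctrb : ctrb = FastAux.ctrbM A B (f - d + 1) := rfl
  have key : ∀ v : Fin (f - d + 1) × Fin m → ℝ,
      (Markov A B C D (f - d + 1)).mulVec v = 0 → ctrb.mulVec v = 0 → v = 0 := by
    intro v hv hc
    exact FastAux.core A B C D (k := f - d) (f := f) h1 h2 v hv (by rwa [hctrb] at hc)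
  refine ⟨key, ?_⟩
  have hmapeq : Submodule.map ctrb.mulVecLin
        (LinearMap.ker (Markov A B C D (f - d + 1)).mulVecLin)
      = LinearMap.range (ctrb.mulVecLin.comp
        (LinearMap.ker (Markov A B C D (f - d + 1)).mulVecLin).subtype) := by
    rw [LinearMap.range_comp, Submodule.range_subtype]
  rw [hmapeq]
  rw [LinearMap.finrank_range_of_inj, h1]
  intro x y hxy
  apply Subtype.ext
  have hsub : (Markov A B C D (f - d + 1)).mulVec (x.val - y.val) = 0 := by
    have := Submodule.sub_mem _ x.2 y.2
    rwa [LinearMap.mem_ker, Matrix.mulVecLin_apply] at this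
  have hcsub : ctrb.mulVec (x.val - y.val) = 0 := by
    have : ctrb.mulVecLin (x.val - y.val) = 0 := by
      rw [map_sub]
      have hxy' : ctrb.mulVecLin x.val = ctrb.mulVecLin y.val := hxy
      rw [hxy', sub_self]
    rwa [Matrix.mulVecLin_apply] at this
  have := key (x.val - y.val) hsub hcsub
  exact sub_eq_zero.mp this
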